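/- Let $K \subset \mathbb{R}^n$ be a symmetric convex body with $M = \int_{S^{n-1}}\|x\|_K d\nu_n$ and $b = \max_{S^{n-1}}\|\cdot\|_K$ attained at the unit vector $e_1$, and let $\epsilon \in (0,1)$. Then for every integer $k$, $\nu_{n,k}(\{F \in G_{n,k} : \forall x \in F \cap S^{n-1},\ \|x\|_K < (1+\epsilon)M\}) \le \nu_n(\{x \in S^{n-1} : |P_{V_0}(x)| < (1+\epsilon)\tfrac{M}{b}\})$ for any fixed $k$-dimensional subspace $V_0$. -/

import Mathlib

noncomputable section
open MeasureTheory Metric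
open scoped ENNReal RealInnerProductSpace

/-- `Euc n` is the Euclidean space `ℝⁿ`. -/
abbrev Euc (n : ℕ) := EuclideanSpace ℝ (Fin n)

/-- The unit sphere `S^{n-1} ⊂ ℝⁿ`. -/
abbrev Sph (n : ℕ) := Metric.sphere (0 : Euc n) 1

/-- A rotation (linear isometry) of `ℝⁿ` restricted to the unit sphere. -/
def sphereRot {n : ℕ} (g : Euc n ≃ₗᵢ[ℝ] Euc n) (x : Sph n) : Sph n :=
  ⟨g x, by
    have hx : ‖(x : Euc n)‖ = 1 := by simpa using mem_sphere_zero_iff_norm.mp x.2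
    simp [mem_sphere_zero_iff_norm, g.norm_map, hx]⟩

/-- `ν` is the normalized Haar (uniform, rotation invariant probability) measure
on the unit sphere. -/
def IsHaarSphere {n : ℕ} (ν : Measure (Sph n)) : Prop :=
  IsProbabilityMeasure ν ∧ ∀ g : Euc n ≃ₗᵢ[ℝ] Euc n, ν.map (sphereRot g) = ν

/-- `projNorm V x = |P_V x|`, the Euclidean norm of the orthogonal projection of `x`
onto the subspace `V`. -/
def projNorm {n : ℕ} (V : Submodule ℝ (Euc n)) (x : Euc n) : ℝ :=
  ‖(V.orthogonalProjectionOnto x : Euc n)‖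

/-- The orthogonal projection onto `V` as a continuous linear map `ℝⁿ → ℝⁿ`. -/
def projCLM {n : ℕ} (V : Submodule ℝ (Euc n)) : Euc n →L[ℝ] Euc n :=
  V.subtypeL.comp V.orthogonalProjectionOnto

/-- The Grassmannian `G_{n,k}` of `k`-dimensional linear subspaces of `ℝⁿ`. -/
def Gr (n k : ℕ) := {V : Submodule ℝ (Euc n) // Module.finrank ℝ V = k}

/-- Borel measurable structure on the Grassmannian, induced by the embedding
`V ↦ P_V` into the space of continuous linear maps. -/
instance {n k : ℕ} : MeasurableSpace (Gr n k) :=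
  MeasurableSpace.comap (fun V => projCLM V.1) (borel _)

/-- The action of a rotation of `ℝⁿ` on the Grassmannian. -/
def grRot {n k : ℕ} (g : Euc n ≃ₗᵢ[ℝ] Euc n) (V : Gr n k) : Gr n k :=
  ⟨V.1.map g.toLinearEquiv.toLinearMap,
    (LinearEquiv.finrank_map_eq g.toLinearEquiv V.1).trans V.2⟩

/-- `μ` is the normalized Haar (rotation invariant probability) measure on the
Grassmannian `G_{n,k}`. -/
def IsHaarGrass {n k : ℕ} (μ : Measure (Gr n k)) : Prop :=
  IsProbabilityMeasure μ ∧ ∀ g : Euc n ≃ₗᵢ[ℝ] Euc n, μ.map (grRot g) = μ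

set_option maxHeartbeats 1000000

/-! ### Auxiliary lemmas -/

section Aux

open Module

variable {n k : ℕ}

instance instMSCLM (n : ℕ) : MeasurableSpace (Euc n →L[ℝ] Euc n) := borel _
instance instBSCLM (n : ℕ) : BorelSpace (Euc n →L[ℝ] Euc n) := ⟨rfl⟩

lemma projNorm_eq_norm_projCLM (V : Submodule ℝ (Euc n)) (x : Euc n) :
    projNorm V x = ‖projCLM V x‖ := rfl

lemma projCLM_map (g : Euc n ≃ₗᵢ[ℝ] Euc n) (V : Submodule ℝ (Euc n)) (x : Euc n) :
    projCLM (V.map g.toLinearEquiv.toLinearMap) x = g (projCLM V (g.symm x)) := by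
  exact (Submodule.starProjection_map_apply (𝕜 := ℝ) g V x :)

lemma projNorm_map (g : Euc n ≃ₗᵢ[ℝ] Euc n) (V : Submodule ℝ (Euc n)) (x : Euc n) :
    projNorm (V.map g.toLinearEquiv.toLinearMap) x = projNorm V (g.symm x) := by
  rw [projNorm_eq_norm_projCLM, projNorm_eq_norm_projCLM, projCLM_map, g.norm_map]

lemma measurable_projCLM : Measurable (fun F : Gr n k => projCLM F.1) :=
  fun _ hs => ⟨_, hs, rfl⟩

lemma measurable_grRot (g : Euc n ≃ₗᵢ[ℝ] Euc n) : Measurable (grRot (n := n) (k := k) g) := by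
  have hc : Continuous (fun A : Euc n →L[ℝ] Euc n =>
      (g.toLinearIsometry.toContinuousLinearMap).comp
        (A.comp (g.symm.toLinearIsometry.toContinuousLinearMap))) :=
    continuous_const.clm_comp (continuous_id.clm_comp continuous_const)
  have heq : (fun F : Gr n k => projCLM (grRot g F).1)
      = (fun A : Euc n →L[ℝ] Euc n =>
          (g.toLinearIsometry.toContinuousLinearMap).comp
            (A.comp (g.symm.toLinearIsometry.toContinuousLinearMap)))
        ∘ (fun F : Gr n k => projCLM F.1) := by
    funext F
    refine ContinuousLinearMap.ext fun x => ?_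
    show projCLM (F.1.map g.toLinearEquiv.toLinearMap) x = _
    rw [projCLM_map]
    rfl
  rintro s ⟨t, ht, rfl⟩
  have : grRot (n := n) (k := k) g ⁻¹' ((fun F : Gr n k => projCLM F.1) ⁻¹' t)
      = (fun F : Gr n k => projCLM (grRot g F).1) ⁻¹' t := rfl
  rw [this, heq]
  exact measurable_projCLM (hc.measurable ht)

lemma measurable_projNorm_apply (y : Euc n) :
    Measurable (fun F : Gr n k => projNorm F.1 y) := by
  have hc : Continuous (fun A : Euc n →L[ℝ] Euc n => ‖A y‖) :=
    ((ContinuousLinearMap.apply ℝ (Euc n) y).continuous).norm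
  have := hc.measurable.comp (measurable_projCLM (n := n) (k := k))
  exact this

lemma measurable_projNorm_joint :
    Measurable (fun p : Sph n × Gr n k => projNorm p.2.1 (p.1 : Euc n)) := by
  have h1 : Measurable (fun p : Sph n × Gr n k =>
      ((projCLM p.2.1, (p.1 : Euc n)) : (Euc n →L[ℝ] Euc n) × Euc n)) :=
    (measurable_projCLM.comp measurable_snd).prodMk
      (continuous_subtype_val.measurable.comp measurable_fst)
  have h2 : Continuous (fun q : (Euc n →L[ℝ] Euc n) × Euc n => ‖q.1 q.2‖) :=
    isBoundedBilinearMap_apply.continuous.norm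
  have := h2.measurable.comp h1
  exact this

/-- Any two subspaces of equal finite rank are mapped to one another by a rotation. -/
lemma exists_rot_map (V W : Submodule ℝ (Euc n)) (h : finrank ℝ V = finrank ℝ W) :
    ∃ g : Euc n ≃ₗᵢ[ℝ] Euc n, V.map g.toLinearEquiv.toLinearMap = W := by
  let e : V ≃ₗᵢ[ℝ] W :=
    (stdOrthonormalBasis ℝ V).repr.trans
      (((stdOrthonormalBasis ℝ W).reindex (finCongr h.symm)).repr).symm
  let L : V →ₗᵢ[ℝ] Euc n := W.subtypeₗᵢ.comp e.toLinearIsometry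
  let g := L.extend.toLinearIsometryEquiv rfl
  refine ⟨g, ?_⟩
  have hg : ∀ v : V, g v = L v := by
    intro v
    have := L.extend_apply v
    simpa [g, LinearIsometry.coe_toLinearIsometryEquiv] using this
  have hle : V.map g.toLinearEquiv.toLinearMap ≤ W := by
    rintro x ⟨v, hv, rfl⟩
    have : g v = L ⟨v, hv⟩ := hg ⟨v, hv⟩
    show g v ∈ W
    rw [this]
    exact (e ⟨v, hv⟩).2
  refine Submodule.eq_of_le_of_finrank_eq hle ?_
  rw [LinearEquiv.finrank_map_eq]
  exact h

/-- Any unit vector is mapped to any other unit vector by a rotation. -/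
lemma exists_rot_vec [NeZero n] (x y : Euc n) (hx : ‖x‖ = 1) (hy : ‖y‖ = 1) :
    ∃ g : Euc n ≃ₗᵢ[ℝ] Euc n, g x = y := by
  have hcard : finrank ℝ (Euc n) = Fintype.card (Fin n) := by simp
  have hortho : ∀ z : Euc n, ‖z‖ = 1 →
      Orthonormal ℝ (({0} : Set (Fin n)).restrict (fun _ : Fin n => z)) := by
    intro z hz
    constructor
    · intro i
      exact hz
    · intro i j hij
      exact absurd (Subsingleton.elim i j) hij
  obtain ⟨bx, hbx⟩ :=
    (hortho x hx).exists_orthonormalBasis_extension_of_card_eq hcard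
  obtain ⟨by', hby⟩ :=
    (hortho y hy).exists_orthonormalBasis_extension_of_card_eq hcard
  refine ⟨bx.repr.trans by'.repr.symm, ?_⟩
  have h1 : bx 0 = x := hbx 0 rfl
  have h2 : by' 0 = y := hby 0 rfl
  have : bx.repr x = EuclideanSpace.single 0 1 := by
    rw [← h1]; exact bx.repr_self 0
  simp only [LinearIsometryEquiv.trans_apply, this]
  rw [← h2]
  exact by'.repr_symm_single 0

lemma le_of_forall_Ioo_mul_le {p q : ℝ} (h : ∀ c : ℝ, c ∈ Set.Ioo (0 : ℝ) 1 → c * p ≤ q) :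
    p ≤ q := by
  have hne : (nhdsWithin (1 : ℝ) (Set.Ioo 0 1)).NeBot :=
    right_nhdsWithin_Ioo_neBot one_pos
  have h1 : Filter.Tendsto (fun c : ℝ => c * p) (nhdsWithin 1 (Set.Ioo 0 1)) (nhds p) := by
    have := ((continuous_mul_right p).tendsto (1 : ℝ)).mono_left
      (nhdsWithin_le_nhds (s := Set.Ioo (0:ℝ) 1))
    simpa using this
  exact le_of_tendsto h1 (eventually_nhdsWithin_of_forall h)

end Aux

/-- The Grassmannian measure of subspaces all of whose unit vectors have `‖x‖_K < (1+ε)M`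
is at most the spherical measure of `{x : |P_{V₀} x| < (1+ε) M / b}`. -/
theorem stmt_16 (n k : ℕ) [NeZero n] (hkn : k ≤ n)
    (K : Set (Euc n)) (hKconv : Convex ℝ K) (hKsymm : K = -K) (hKcomp : IsCompact K)
    (hK0 : (0 : Euc n) ∈ interior K)
    (ν : Measure (Sph n)) (hν : IsHaarSphere ν)
    (μ : Measure (Gr n k)) (hμ : IsHaarGrass μ)
    (M b ε : ℝ) (hε : ε ∈ Set.Ioo (0 : ℝ) 1)
    (hM : M = ∫ x : Sph n, gauge K (x : Euc n) ∂ν)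
    (hb : b = gauge K (EuclideanSpace.single (0 : Fin n) 1))
    (hmax : ∀ x : Euc n, ‖x‖ = 1 → gauge K x ≤ b)
    (V₀ : Submodule ℝ (Euc n)) (hV₀ : Module.finrank ℝ V₀ = k) :
    μ {F : Gr n k | ∀ x : Euc n, x ∈ F.1 → ‖x‖ = 1 → gauge K x < (1 + ε) * M}
      ≤ ν {x : Sph n | projNorm V₀ (x : Euc n) < (1 + ε) * M / b} := by
  obtain ⟨hμp, hμinv⟩ := hμ
  obtain ⟨hνp, hνinv⟩ := hν
  set e₁ : Euc n := EuclideanSpace.single (0 : Fin n) 1 with he₁def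
  have he₁ : ‖e₁‖ = 1 := by simp [he₁def]
  have hbe : b = gauge K e₁ := hb
  have hK0' : K ∈ nhds (0 : Euc n) := mem_interior_iff_mem_nhds.mp hK0
  have h0K : (0 : Euc n) ∈ K := interior_subset hK0
  have habs : Absorbent ℝ K := absorbent_nhds_zero hK0'
  have hbdd : Bornology.IsVonNBounded ℝ K :=
    NormedSpace.isVonNBounded_of_isBounded ℝ hKcomp.isBounded
  have hbpos : 0 < b := by
    rw [hbe]
    refine (gauge_pos habs hbdd).2 ?_
    intro h0
    rw [h0, norm_zero] at he₁
    exact zero_ne_one he₁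
  -- gauge is dominated by `b * ‖·‖`
  have hgb : ∀ y : Euc n, gauge K y ≤ b * ‖y‖ := by
    intro y
    rcases eq_or_ne y 0 with rfl | hy
    · simp [gauge_zero]
    · have hny : 0 < ‖y‖ := norm_pos_iff.mpr hy
      have hu : ‖(‖y‖⁻¹ • y)‖ = 1 := by
        rw [norm_smul, Real.norm_eq_abs, abs_of_pos (inv_pos.mpr hny), inv_mul_cancel₀ hny.ne']
      have hle := hmax _ hu
      have heq : gauge K y = ‖y‖ * gauge K (‖y‖⁻¹ • y) := by
        rw [← smul_eq_mul, ← gauge_smul_of_nonneg (norm_nonneg y)]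
        congr 1
        rw [smul_smul, mul_inv_cancel₀ hny.ne', one_smul]
      rw [heq, mul_comm b ‖y‖]
      exact mul_le_mul_of_nonneg_left hle (norm_nonneg y)
  -- `K` is contained in the halfspace `{x | ⟪e₁, x⟫ ≤ b⁻¹}`
  have hsub : ∀ x ∈ K, ⟪e₁, x⟫ ≤ b⁻¹ := by
    set w : Euc n := b⁻¹ • e₁ with hw
    have hgw : gauge K w = 1 := by
      rw [hw, gauge_smul_of_nonneg (inv_pos.mpr hbpos).le, ← hbe, smul_eq_mul,
        inv_mul_cancel₀ hbpos.ne']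
    have hwni : w ∉ interior K := by
      intro hwK
      have := (gauge_lt_one_iff_mem_interior hKconv hK0').2 hwK
      rw [hgw] at this
      exact lt_irrefl _ this
    obtain ⟨f, hf⟩ := geometric_hahn_banach_open_point hKconv.interior isOpen_interior hwni
    have hfw0 : 0 < f w := by
      have := hf 0 hK0
      simpa using this
    have hcl : ∀ a ∈ closure K, f a ≤ f w := by
      intro a ha
      refine le_of_forall_Ioo_mul_le ?_
      intro t ht
      have hmem : t • a ∈ interior K := by
        have h' := hKconv.combo_closure_interior_mem_interior ha hK0 ht.1.le
          (by linarith [ht.2] : (0:ℝ) < 1 - t) (by ring)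
        simpa using h'
      have := hf _ hmem
      rw [_root_.map_smul, smul_eq_mul] at this
      exact this.le
    have hball : ∀ y : Euc n, ‖y‖ ≤ b⁻¹ → f y ≤ f w := by
      intro y hy
      apply hcl
      refine (gauge_le_one_iff_mem_closure hKconv hK0').1 ?_
      calc gauge K y ≤ b * ‖y‖ := hgb y
        _ ≤ b * b⁻¹ := mul_le_mul_of_nonneg_left hy hbpos.le
        _ = 1 := mul_inv_cancel₀ hbpos.ne'
    have hflin : ∀ y : Euc n, f y ≤ b * ‖y‖ * f w := by
      intro y
      rcases eq_or_ne y 0 with rfl | hy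
      · simp
      · have hny : 0 < ‖y‖ := norm_pos_iff.mpr hy
        have h1 : f ((b⁻¹ * ‖y‖⁻¹) • y) ≤ f w := by
          apply hball
          rw [norm_smul, Real.norm_eq_abs, abs_of_pos (by positivity)]
          rw [mul_assoc, inv_mul_cancel₀ hny.ne', mul_one]
        rw [_root_.map_smul, smul_eq_mul] at h1
        calc f y = (b * ‖y‖) * ((b⁻¹ * ‖y‖⁻¹) * f y) := by
              field_simp
          _ ≤ (b * ‖y‖) * f w := by
              refine mul_le_mul_of_nonneg_left h1 (by positivity)
    set z : Euc n := (InnerProductSpace.toDual ℝ (Euc n)).symm f with hzdef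
    have hz : ∀ y : Euc n, ⟪z, y⟫ = f y := fun y => InnerProductSpace.toDual_symm_apply
    have hzne : z ≠ 0 := by
      intro h0
      have := hz w
      rw [h0, inner_zero_left] at this
      exact absurd this.symm (ne_of_gt hfw0)
    have hznorm : 0 < ‖z‖ := norm_pos_iff.mpr hzne
    have hfw : f w = b⁻¹ * ⟪z, e₁⟫ := by
      rw [← hz, hw, real_inner_smul_right]
    have h1 : ‖z‖ ^ 2 ≤ b * ‖z‖ * (b⁻¹ * ⟪z, e₁⟫) := by
      have := hflin z
      rw [← hz z, real_inner_self_eq_norm_sq, hfw] at this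
      linarith
    have h2 : ‖z‖ ≤ ⟪z, e₁⟫ := by
      have hb' : b * ‖z‖ * (b⁻¹ * ⟪z, e₁⟫) = ‖z‖ * ⟪z, e₁⟫ := by
        field_simp
      rw [hb'] at h1
      nlinarith
    have h3 : ⟪z, e₁⟫ ≤ ‖z‖ := by
      have := real_inner_le_norm z e₁
      rwa [he₁, mul_one] at this
    have h4 : ⟪z, e₁⟫ = ‖z‖ * ‖e₁‖ := by
      rw [he₁, mul_one]
      exact le_antisymm h3 h2
    have h5 : z = ‖z‖ • e₁ := by
      have := inner_eq_norm_mul_iff_real.mp h4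
      rwa [he₁, one_smul] at this
    intro x hx
    have h6 : f x ≤ f w := hcl x (subset_closure hx)
    rw [← hz x, hfw] at h6
    have hze : ⟪z, x⟫ = ‖z‖ * ⟪e₁, x⟫ := by
      conv_lhs => rw [h5]
      exact real_inner_smul_left _ _ _
    have hze1 : ⟪z, e₁⟫ = ‖z‖ := by rw [h4, he₁, mul_one]
    rw [hze, hze1] at h6
    have : ‖z‖ * ⟪e₁, x⟫ ≤ ‖z‖ * b⁻¹ := by
      calc ‖z‖ * ⟪e₁, x⟫ ≤ b⁻¹ * ‖z‖ := h6
        _ = ‖z‖ * b⁻¹ := mul_comm _ _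
    exact le_of_mul_le_mul_left this hznorm
  -- the key pointwise inequality
  have hkey : ∀ x : Euc n, b * ⟪e₁, x⟫ ≤ gauge K x := by
    intro x
    rw [gauge_def]
    refine le_csInf habs.gauge_set_nonempty ?_
    rintro r ⟨hr, hxr⟩
    obtain ⟨y, hy, rfl⟩ := Set.mem_smul_set.mp hxr
    rw [real_inner_smul_right]
    have hby := hsub y hy
    have hr' : (0:ℝ) < r := hr
    calc b * (r * ⟪e₁, y⟫) = r * (b * ⟪e₁, y⟫) := by ring
      _ ≤ r * (b * b⁻¹) := by
          refine mul_le_mul_of_nonneg_left ?_ hr'.le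
          exact mul_le_mul_of_nonneg_left hby hbpos.le
      _ = r := by rw [mul_inv_cancel₀ hbpos.ne', mul_one]
  -- positivity of M
  have hMpos : 0 < M := by
    obtain ⟨R, hKR⟩ := hKcomp.isBounded.subset_closedBall (0 : Euc n)
    set R' : ℝ := max R 1 with hR'def
    have hR' : 0 < R' := lt_of_lt_of_le one_pos (le_max_right _ _)
    have hKR' : K ⊆ closedBall 0 R' := hKR.trans (closedBall_subset_closedBall (le_max_left _ _))
    have hlow : ∀ x : Sph n, R'⁻¹ ≤ gauge K (x : Euc n) := by
      intro x
      have h' := le_gauge_of_subset_closedBall habs hR'.le hKR' (x := (x : Euc n))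
      rw [mem_sphere_zero_iff_norm.mp x.2, one_div] at h'
      exact h'
    have hcont : Continuous fun x : Sph n => gauge K (x : Euc n) :=
      (continuous_gauge hKconv hK0').comp continuous_subtype_val
    have hint : Integrable (fun x : Sph n => gauge K (x : Euc n)) ν :=
      hcont.integrable_of_hasCompactSupport (HasCompactSupport.of_compactSpace _)
    have hRM : R'⁻¹ ≤ M := by
      rw [hM]
      have h1 : ∫ _x : Sph n, R'⁻¹ ∂ν = R'⁻¹ := by
        rw [integral_const]
        simp
      rw [← h1]
      exact integral_mono (integrable_const _) hint hlow
    exact lt_of_lt_of_le (inv_pos.mpr hR') hRM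
  set c : ℝ := (1 + ε) * M / b with hcdef
  have hcpos : 0 < c := div_pos (mul_pos (by linarith [hε.1]) hMpos) hbpos
  -- Step A : the inclusion of the Grassmannian sets
  have hST : {F : Gr n k | ∀ x : Euc n, x ∈ F.1 → ‖x‖ = 1 → gauge K x < (1 + ε) * M}
      ⊆ {F : Gr n k | projNorm F.1 e₁ < c} := by
    intro F hF
    show projNorm F.1 e₁ < c
    set v : Euc n := (F.1.orthogonalProjectionOnto e₁ : Euc n) with hv
    have hvF : v ∈ F.1 := (F.1.orthogonalProjectionOnto e₁).2
    have hPn : projNorm F.1 e₁ = ‖v‖ := rfl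
    rcases eq_or_ne v 0 with h0 | h0
    · rw [hPn, h0, norm_zero]
      exact hcpos
    · have hnv : 0 < ‖v‖ := norm_pos_iff.mpr h0
      set u : Euc n := ‖v‖⁻¹ • v with hu
      have huF : u ∈ F.1 := F.1.smul_mem _ hvF
      have hun : ‖u‖ = 1 := by
        rw [hu, norm_smul, Real.norm_eq_abs, abs_of_pos (inv_pos.mpr hnv),
          inv_mul_cancel₀ hnv.ne']
      have h1 : gauge K u < (1 + ε) * M := hF u huF hun
      have h2 : b * ⟪e₁, u⟫ ≤ gauge K u := hkey u
      have h3 : ⟪e₁, u⟫ = ‖v‖ := by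
        have horth := Submodule.starProjection_inner_eq_zero (K := F.1) e₁ v hvF
        rw [inner_sub_left] at horth
        have hev : ⟪e₁, v⟫ = ‖v‖ ^ 2 := by
          have : ⟪e₁, v⟫ = ⟪v, v⟫ := by
            have : ⟪e₁, v⟫ - ⟪v, v⟫ = 0 := by
              simpa [hv] using horth
            linarith
          rw [this, real_inner_self_eq_norm_sq]
        rw [hu, real_inner_smul_right, hev]
        field_simp
      have h4 : b * ‖v‖ < (1 + ε) * M := by
        rw [← h3]
        exact lt_of_le_of_lt h2 h1
      rw [hPn, hcdef, lt_div_iff₀ hbpos]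
      linarith [h4]
  -- measurability of the relevant sets
  have hT'meas : ∀ W : Submodule ℝ (Euc n), MeasurableSet {x : Sph n | projNorm W (x : Euc n) < c} := by
    intro W
    have hcont : Continuous fun x : Sph n => projNorm W (x : Euc n) := by
      have : Continuous fun x : Sph n => ‖projCLM W (x : Euc n)‖ :=
        ((projCLM W).continuous.comp continuous_subtype_val).norm
      exact this
    exact (isOpen_lt hcont continuous_const).measurableSet
  have hTxmeas : ∀ y : Euc n, MeasurableSet {F : Gr n k | projNorm F.1 y < c} :=
    fun y => measurable_projNorm_apply y measurableSet_Iio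
  -- rotation invariance on the sphere side
  have hν_inv : ∀ F : Gr n k,
      ν {x : Sph n | projNorm F.1 (x : Euc n) < c}
        = ν {x : Sph n | projNorm V₀ (x : Euc n) < c} := by
    intro F
    obtain ⟨g, hg⟩ := exists_rot_map V₀ F.1 (hV₀.trans F.2.symm)
    have hmr : Measurable (sphereRot g) :=
      (Continuous.subtype_mk (g.continuous.comp continuous_subtype_val) _).measurable
    have hpre : sphereRot g ⁻¹' {x : Sph n | projNorm F.1 (x : Euc n) < c}
        = {x : Sph n | projNorm V₀ (x : Euc n) < c} := by
      ext x
      simp only [Set.mem_preimage, Set.mem_setOf_eq]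
      have : projNorm F.1 ((sphereRot g x : Sph n) : Euc n) = projNorm V₀ (x : Euc n) := by
        have hco : ((sphereRot g x : Sph n) : Euc n) = g (x : Euc n) := rfl
        rw [hco, ← hg, projNorm_map, g.symm_apply_apply]
      rw [this]
    calc ν {x : Sph n | projNorm F.1 (x : Euc n) < c}
        = ν.map (sphereRot g) {x : Sph n | projNorm F.1 (x : Euc n) < c} := by rw [hνinv g]
      _ = ν (sphereRot g ⁻¹' {x : Sph n | projNorm F.1 (x : Euc n) < c}) :=
          Measure.map_apply hmr (hT'meas F.1)
      _ = ν {x : Sph n | projNorm V₀ (x : Euc n) < c} := by rw [hpre]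
  -- rotation invariance on the Grassmannian side
  have hμ_inv : ∀ x : Sph n,
      μ {F : Gr n k | projNorm F.1 (x : Euc n) < c}
        = μ {F : Gr n k | projNorm F.1 e₁ < c} := by
    intro x
    obtain ⟨g, hg⟩ := exists_rot_vec e₁ (x : Euc n) he₁ (mem_sphere_zero_iff_norm.mp x.2)
    have hsymm : g.symm (x : Euc n) = e₁ := by
      rw [← hg, g.symm_apply_apply]
    have hpre : grRot g ⁻¹' {F : Gr n k | projNorm F.1 (x : Euc n) < c}
        = {F : Gr n k | projNorm F.1 e₁ < c} := by
      ext F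
      simp only [Set.mem_preimage, Set.mem_setOf_eq]
      have : projNorm (grRot g F).1 (x : Euc n) = projNorm F.1 e₁ := by
        have hco : (grRot g F).1 = F.1.map g.toLinearEquiv.toLinearMap := rfl
        rw [hco, projNorm_map, hsymm]
      rw [this]
    calc μ {F : Gr n k | projNorm F.1 (x : Euc n) < c}
        = μ.map (grRot g) {F : Gr n k | projNorm F.1 (x : Euc n) < c} := by rw [hμinv g]
      _ = μ (grRot g ⁻¹' {F : Gr n k | projNorm F.1 (x : Euc n) < c}) :=
          Measure.map_apply (measurable_grRot g) (hTxmeas (x : Euc n))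
      _ = μ {F : Gr n k | projNorm F.1 e₁ < c} := by rw [hpre]
  -- Fubini's theorem turns the two invariances into the equidistribution identity
  set φ : ℝ → ℝ≥0∞ := Set.indicator (Set.Iio c) (fun _ => 1) with hφdef
  have hφmeas : Measurable φ := measurable_const.indicator measurableSet_Iio
  have key1 : ∀ {γ : Type} [MeasurableSpace γ] (m : Measure γ) (q : γ → ℝ), Measurable q →
      ∫⁻ a, φ (q a) ∂m = m {a | q a < c} := by
    intro γ _ m q hq
    have heq : (fun a => φ (q a)) = Set.indicator (q ⁻¹' Set.Iio c) (fun _ => (1 : ℝ≥0∞)) := by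
      funext a
      by_cases h : q a < c <;>
        simp [hφdef, Set.indicator_apply, Set.mem_preimage, Set.mem_Iio, h]
    rw [heq]
    have h2 := lintegral_indicator_one (μ := m) (s := q ⁻¹' Set.Iio c) (hq measurableSet_Iio)
    rw [show (q ⁻¹' Set.Iio c) = {a | q a < c} from rfl] at h2
    rw [← h2]
    rfl
  have hμT : μ {F : Gr n k | projNorm F.1 e₁ < c}
      = ν {x : Sph n | projNorm V₀ (x : Euc n) < c} := by
    have hjm : Measurable fun p : Sph n × Gr n k => φ (projNorm p.2.1 (p.1 : Euc n)) :=
      hφmeas.comp measurable_projNorm_joint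
    have hswap := lintegral_lintegral_swap (μ := ν) (ν := μ)
      (f := fun (x : Sph n) (F : Gr n k) => φ (projNorm F.1 (x : Euc n))) hjm.aemeasurable
    calc μ {F : Gr n k | projNorm F.1 e₁ < c}
        = ∫⁻ _x : Sph n, μ {F : Gr n k | projNorm F.1 e₁ < c} ∂ν := by
          rw [lintegral_const, measure_univ, mul_one]
      _ = ∫⁻ x : Sph n, ∫⁻ F : Gr n k, φ (projNorm F.1 (x : Euc n)) ∂μ ∂ν := by
          refine lintegral_congr fun x => ?_
          rw [key1 μ _ (measurable_projNorm_apply _), hμ_inv x]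
      _ = ∫⁻ F : Gr n k, ∫⁻ x : Sph n, φ (projNorm F.1 (x : Euc n)) ∂ν ∂μ := hswap
      _ = ∫⁻ _F : Gr n k, ν {x : Sph n | projNorm V₀ (x : Euc n) < c} ∂μ := by
          refine lintegral_congr fun F => ?_
          have hqm : Measurable fun x : Sph n => projNorm F.1 (x : Euc n) := by
            have : Continuous fun x : Sph n => ‖projCLM F.1 (x : Euc n)‖ :=
              ((projCLM F.1).continuous.comp continuous_subtype_val).norm
            exact this.measurable
          rw [key1 ν _ hqm, hν_inv F]
      _ = ν {x : Sph n | projNorm V₀ (x : Euc n) < c} := by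
          rw [lintegral_const, measure_univ, mul_one]
  exact le_trans (measure_mono hST) (le_of_eq hμT)
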